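/- Let G be a weak FI-group with a central filtration {G(k)} (k ≥ 1). Assume G is boundedly generated in degree A, and that for some fixed k ≥ 1 and B_k ≥ 0 we have G(k) = G(k)^{≤B_k}. Then for every N ≥ A + B_k and every finite set J ⊆ ℕ, we have [G_J, G(k)_J] ⊆ G(k+1)_J^{≤N}. -/

import Mathlib

universe u

/-- Two homomorphisms `A →* B` are conjugate if they differ by post-composition with an inner
automorphism of `B`; a *homomorphism-modulo-conjugacy* is an equivalence class for this
relation. -/
def HomConj {A B : Type*} [Group A] [Group B] (f g : A →* B) : Prop :=
  ∃ b : B, ∀ a : A, g a = b * f a * b⁻¹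

/-- The inclusion function `↥I → ↥J` of a pair of finite sets `I ⊆ J ⊆ ℕ`. -/
def finsetIncl {I J : Finset ℕ} (h : I ⊆ J) : I → J := fun x => ⟨x.1, h x.2⟩

theorem finsetIncl_injective {I J : Finset ℕ} (h : I ⊆ J) :
    Function.Injective (finsetIncl h) := by
  intro a b hab
  have h2 := congrArg (fun x : J => (x : ℕ)) hab
  exact Subtype.ext h2

/-- A **weak FI-group**: a group `G_I` for each finite subset `I ⊆ ℕ`; a
homomorphism-modulo-conjugacy `G_f : G_I → G_J` for each injection `f : I ↪ J` (presented here
by a representative homomorphism `map f`, with the compatibility conditions `G_{id} = id` and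
`G_{g∘f} = G_g ∘ G_f` holding up to conjugacy); and a genuine homomorphism `G_I^J = incl h` for
each pair `I ⊆ J`, representing `G_{i_I^J}` and satisfying `G_J^K ∘ G_I^J = G_I^K` on the
nose. -/
structure WeakFIGroup where
  G : Finset ℕ → Type u
  [grp : ∀ I, Group (G I)]
  map : ∀ {I J : Finset ℕ} (f : I → J), Function.Injective f → (G I →* G J)
  incl : ∀ {I J : Finset ℕ}, I ⊆ J → (G I →* G J)
  map_id : ∀ I : Finset ℕ, HomConj (map (id : I → I) fun _ _ h => h) (MonoidHom.id (G I))
  map_comp : ∀ {I J K : Finset ℕ} (f : I → J) (g : J → K)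
      (hf : Function.Injective f) (hg : Function.Injective g),
      HomConj (map (g ∘ f) (hg.comp hf)) ((map g hg).comp (map f hf))
  incl_represents : ∀ {I J : Finset ℕ} (h : I ⊆ J),
      HomConj (map (finsetIncl h) (finsetIncl_injective h)) (incl h)
  incl_comp : ∀ {I J K : Finset ℕ} (hIJ : I ⊆ J) (hJK : J ⊆ K),
      (incl hJK).comp (incl hIJ) = incl (hIJ.trans hJK)

attribute [instance] WeakFIGroup.grp

/-- A **normal weak FI-subgroup** `H ⊴ G`: a normal subgroup `H_I ⊴ G_I` for each finite
`I ⊆ ℕ`, with `G_f(H_I) ⊆ H_J` for every injection `f : I ↪ J` (this image is well defined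
since `H_J` is normal). -/
structure NormalWeakFISub (𝒢 : WeakFIGroup.{u}) where
  H : ∀ I : Finset ℕ, Subgroup (𝒢.G I)
  normal : ∀ I : Finset ℕ, (H I).Normal
  stable : ∀ {I J : Finset ℕ} (f : I → J) (hf : Function.Injective f),
      (H I).map (𝒢.map f hf) ≤ H J

/-- `G` is *boundedly generated in degree `A`* if for every finite set `J ⊆ ℕ`, the group
`G_J` is generated by its subgroups `G_J(I) = G_I^J(G_I)` over all `I ⊆ J` with `|I| ≤ A`. -/
def WeakFIGroup.BoundedlyGenerated (𝒢 : WeakFIGroup.{u}) (A : ℕ) : Prop :=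
  ∀ J : Finset ℕ,
    (⨆ (I : Finset ℕ) (hIJ : I ⊆ J) (_ : I.card ≤ A),
      Subgroup.map (𝒢.incl hIJ) ⊤) = (⊤ : Subgroup (𝒢.G J))

/-- `H_J^{≤N}`: the subgroup of `H_J` generated by the `G_J`-conjugates of the subgroups
`H_J(I) = G_I^J(H_I)` over all `I ⊆ J` with `|I| ≤ N`. -/
def NormalWeakFISub.leN {𝒢 : WeakFIGroup.{u}} (H : NormalWeakFISub 𝒢) (N : ℕ)
    (J : Finset ℕ) : Subgroup (𝒢.G J) :=
  Subgroup.normalClosure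
    (⋃ (I : Finset ℕ) (hIJ : I ⊆ J) (_ : I.card ≤ N),
      ((H.H I).map (𝒢.incl hIJ) : Set (𝒢.G J)))

/-- `H ⊴ G` is *boundedly normally generated in degree `B`* if for every finite set `J ⊆ ℕ`,
the group `H_J` is generated by the `G_J`-conjugates of its subgroups `H_J(I)` over all
`I ⊆ J` with `|I| ≤ B`. -/
def NormalWeakFISub.BoundedlyNormallyGenerated {𝒢 : WeakFIGroup.{u}}
    (H : NormalWeakFISub 𝒢) (B : ℕ) : Prop :=
  ∀ J : Finset ℕ, H.leN B J = H.H J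

/-- A **central filtration** `{G(k)}_{k ≥ 1}` of a weak FI-group `G`, reindexed here so that
`filt k = G(k+1)`: normal weak FI-subgroups with `G(1) = G`, `G(k) ⊇ G(k+1)`, and
`[G, G(k)] ⊆ G(k+1)` for all `k ≥ 1`. -/
structure CentralFiltration (𝒢 : WeakFIGroup.{u}) where
  filt : ℕ → NormalWeakFISub 𝒢
  filt_zero : ∀ I : Finset ℕ, (filt 0).H I = ⊤
  filt_antitone : ∀ (k : ℕ) (I : Finset ℕ), (filt (k + 1)).H I ≤ (filt k).H I
  central : ∀ (k : ℕ) (I : Finset ℕ),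
      ⁅(⊤ : Subgroup (𝒢.G I)), (filt k).H I⁆ ≤ (filt (k + 1)).H I

instance CentralFiltration.normal_subgroupOf {𝒢 : WeakFIGroup.{u}}
    (C : CentralFiltration 𝒢) (k : ℕ) (I : Finset ℕ) :
    (((C.filt (k + 1)).H I).subgroupOf ((C.filt k).H I)).Normal :=
  ((C.filt (k + 1)).normal I).subgroupOf _

/-- The central filtration has *finite rank* if each abelian group `G(k)_I ⧸ G(k+1)_I` is
finitely generated. -/
def CentralFiltration.FiniteRank {𝒢 : WeakFIGroup.{u}} (C : CentralFiltration 𝒢) : Prop :=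
  ∀ (k : ℕ) (I : Finset ℕ),
    Group.FG ((C.filt k).H I ⧸ ((C.filt (k + 1)).H I).subgroupOf ((C.filt k).H I))

open scoped commutatorElement

/-- The genuine inclusion homomorphism maps `H_I` into `H_J`, since it represents
`G_{i_I^J}` up to conjugation and `H_J` is normal. -/
lemma NormalWeakFISub.incl_mono {𝒢 : WeakFIGroup.{u}} (H : NormalWeakFISub 𝒢)
    {I J : Finset ℕ} (h : I ⊆ J) : (H.H I).map (𝒢.incl h) ≤ H.H J := by
  obtain ⟨b, hb⟩ := 𝒢.incl_represents h
  intro x hx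
  obtain ⟨y, hy, rfl⟩ := Subgroup.mem_map.mp hx
  rw [hb]
  exact (H.normal J).conj_mem _ (H.stable _ (finsetIncl_injective h) ⟨y, hy, rfl⟩) b

/-- **Claim 1 of the proof of Theorem F.**  Let `G` be a weak FI-group with a central
filtration `{G(k)}` (here `C.filt k = G(k+1)`, so the pair `(C.filt k, C.filt (k+1))`
ranges over all consecutive pairs `(G(k), G(k+1))` with `k ≥ 1`).  Assume `G` is boundedly
generated in degree `A` and that `G(k) = G(k)^{≤B}`.  Then for every `N ≥ A + B` and every
finite set `J ⊆ ℕ`, we have `[G_J, G(k)_J] ⊆ G(k+1)_J^{≤N}`. -/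
theorem stmt18 (𝒢 : WeakFIGroup.{u}) (C : CentralFiltration 𝒢) (A B k : ℕ)
    (hBG : 𝒢.BoundedlyGenerated A)
    (hB : ∀ J : Finset ℕ, (C.filt k).leN B J = (C.filt k).H J) :
    ∀ N : ℕ, A + B ≤ N → ∀ J : Finset ℕ,
      ⁅(⊤ : Subgroup (𝒢.G J)), (C.filt k).H J⁆ ≤ (C.filt (k + 1)).leN N J := by
  intro N hN J
  set M := (C.filt (k + 1)).leN N J with hM
  have hMnormal : M.Normal := Subgroup.normalClosure_normal
  -- Core computation: commutators of elements coming from small sets lie in `M`.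
  have core : ∀ (I' : Finset ℕ) (hI'J : I' ⊆ J), I'.card ≤ A →
      ∀ (I : Finset ℕ) (hIJ : I ⊆ J), I.card ≤ B →
      ∀ (a : 𝒢.G I') (h : 𝒢.G I), h ∈ (C.filt k).H I →
      ⁅𝒢.incl hI'J a, 𝒢.incl hIJ h⁆ ∈ M := by
    intro I' hI'J hA I hIJ hBc a h hh
    set L := I ∪ I' with hL
    have hIL : I ⊆ L := Finset.subset_union_left
    have hI'L : I' ⊆ L := Finset.subset_union_right
    have hLJ : L ⊆ J := Finset.union_subset hIJ hI'J
    have hcard : L.card ≤ N := by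
      have h1 : L.card ≤ I.card + I'.card := Finset.card_union_le I I'
      omega
    have hx : 𝒢.incl hI'J a = 𝒢.incl hLJ (𝒢.incl hI'L a) := by
      rw [← MonoidHom.comp_apply, 𝒢.incl_comp]
    have hz : 𝒢.incl hIJ h = 𝒢.incl hLJ (𝒢.incl hIL h) := by
      rw [← MonoidHom.comp_apply, 𝒢.incl_comp]
    rw [hx, hz, ← map_commutatorElement]
    have hc : ⁅𝒢.incl hI'L a, 𝒢.incl hIL h⁆ ∈ (C.filt (k + 1)).H L := by
      apply C.central k L
      exact Subgroup.commutator_mem_commutator (Subgroup.mem_top _)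
        ((C.filt k).incl_mono hIL ⟨h, hh, rfl⟩)
    apply Subgroup.subset_normalClosure
    exact Set.mem_iUnion.mpr ⟨L, Set.mem_iUnion.mpr ⟨hLJ,
      Set.mem_iUnion.mpr ⟨hcard, ⟨_, hc, rfl⟩⟩⟩⟩
  -- Step 2: commutators of arbitrary elements with small-set generators of `G(k)_J`.
  have step2 : ∀ (I : Finset ℕ) (hIJ : I ⊆ J), I.card ≤ B →
      ∀ (h : 𝒢.G I), h ∈ (C.filt k).H I →
      ∀ x : 𝒢.G J, ⁅x, 𝒢.incl hIJ h⁆ ∈ M := by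
    intro I hIJ hBc h hh x
    set z := 𝒢.incl hIJ h with hzdef
    let T' : Subgroup (𝒢.G J) :=
      { carrier := {x | ⁅x, z⁆ ∈ M}
        one_mem' := by
          have : ⁅(1 : 𝒢.G J), z⁆ = 1 := by group
          simp only [Set.mem_setOf_eq, this, one_mem]
        mul_mem' := by
          intro a b ha hb
          have hid : ⁅a * b, z⁆ = (a * ⁅b, z⁆ * a⁻¹) * ⁅a, z⁆ := by group
          simp only [Set.mem_setOf_eq] at *
          rw [hid]
          exact mul_mem (hMnormal.conj_mem _ hb a) ha
        inv_mem' := by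
          intro a ha
          have hid : ⁅a⁻¹, z⁆ = a⁻¹ * ⁅a, z⁆⁻¹ * a⁻¹⁻¹ := by group
          simp only [Set.mem_setOf_eq] at *
          rw [hid]
          exact hMnormal.conj_mem _ (inv_mem ha) a⁻¹ }
    have hle : (⊤ : Subgroup (𝒢.G J)) ≤ T' := by
      rw [← hBG J]
      refine iSup_le fun I' => iSup_le fun hI'J => iSup_le fun hA => ?_
      rintro x hx
      obtain ⟨a, -, rfl⟩ := Subgroup.mem_map.mp hx
      exact core I' hI'J hA I hIJ hBc a h hh
    exact hle (Subgroup.mem_top x)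
  -- Define the normal subgroup of elements commuting into `M` with everything.
  let T : Subgroup (𝒢.G J) :=
    { carrier := {y | ∀ x : 𝒢.G J, ⁅x, y⁆ ∈ M}
      one_mem' := by
        intro x
        have : ⁅x, (1 : 𝒢.G J)⁆ = 1 := by group
        rw [this]; exact one_mem M
      mul_mem' := by
        intro a b ha hb x
        have hid : ⁅x, a * b⁆ = ⁅x, a⁆ * (a * ⁅x, b⁆ * a⁻¹) := by group
        rw [hid]
        exact mul_mem (ha x) (hMnormal.conj_mem _ (hb x) a)
      inv_mem' := by
        intro a ha x
        have hid : ⁅x, a⁻¹⁆ = a⁻¹ * ⁅x, a⁆⁻¹ * a⁻¹⁻¹ := by group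
        rw [hid]
        exact hMnormal.conj_mem _ (inv_mem (ha x)) a⁻¹ }
  have hTnormal : T.Normal := by
    constructor
    intro n hn g x
    have hid : ⁅x, g * n * g⁻¹⁆ = g * ⁅g⁻¹ * x * g, n⁆ * g⁻¹ := by group
    rw [hid]
    exact hMnormal.conj_mem _ (hn _) g
  have hfiltT : (C.filt k).H J ≤ T := by
    rw [← hB J]
    haveI := hTnormal
    apply Subgroup.normalClosure_le_normal
    intro y hy
    obtain ⟨I, hy⟩ := Set.mem_iUnion.mp hy
    obtain ⟨hIJ, hy⟩ := Set.mem_iUnion.mp hy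
    obtain ⟨hBc, hy⟩ := Set.mem_iUnion.mp hy
    obtain ⟨h, hh, rfl⟩ := hy
    exact fun x => step2 I hIJ hBc h hh x
  rw [Subgroup.commutator_le]
  intro g₁ _ g₂ hg₂
  exact hfiltT hg₂ g₁
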